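/- Let n be a nonnegative integer, let α > -1 and let s ∈ ℝ with s + α > -1. Then the power moment of the Laguerre Rakhmanov density satisfies ∫₀^∞ x^{s+α} e^{-x} [L_n^{(α)}(x)]² dx = Γ(α+s+1) C(n+α, n)² · F₂(α+s+1; −n, −n; α+1, α+1; 1, 1). -/

import Mathlib

open MeasureTheory Finset Real

/-- Pochhammer symbol `(a)_k = a (a+1) ⋯ (a+k-1)`. -/
noncomputable def poch (a : ℝ) (k : ℕ) : ℝ := ∏ i ∈ Finset.range k, (a + i)

/-- Generalized binomial coefficient `C(a, j) = (a-j+1)_j / j!`. -/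
noncomputable def gbinom (a : ℝ) (j : ℕ) : ℝ := poch (a - j + 1) j / (j.factorial : ℝ)

/-- Generalized Laguerre polynomial `L_n^{(α)}`. -/
noncomputable def Lag (α : ℝ) (n : ℕ) (x : ℝ) : ℝ :=
  ∑ i ∈ Finset.range (n + 1),
    ((-1 : ℝ) ^ i / (i.factorial : ℝ)) * gbinom ((n : ℝ) + α) (n - i) * x ^ i

/-- Physicists' Hermite polynomial `H_n`. -/
noncomputable def Herm (n : ℕ) (x : ℝ) : ℝ :=
  ∑ k ∈ Finset.range (n / 2 + 1),
    ((-1 : ℝ) ^ k * (n.factorial : ℝ) / ((k.factorial : ℝ) * ((n - 2 * k).factorial : ℝ))) *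
      (2 * x) ^ (n - 2 * k)

/-- Jacobi polynomial `P_n^{(α,γ)}`. -/
noncomputable def Jac (α γ : ℝ) (n : ℕ) (x : ℝ) : ℝ :=
  ∑ k ∈ Finset.range (n + 1),
    gbinom ((n : ℝ) + α) (n - k) * gbinom ((n : ℝ) + γ) k *
      ((x - 1) / 2) ^ k * ((x + 1) / 2) ^ (n - k)

/-- Terminating Lauricella function of type A. -/
noncomputable def lauricellaA {r : ℕ} (a : ℝ) (m : Fin r → ℕ) (c x : Fin r → ℝ) : ℝ :=
  ∑ j ∈ Fintype.piFinset (fun i => Finset.range (m i + 1)),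
    poch a (∑ i, j i) *
      ∏ i, (poch (-(m i : ℝ)) (j i) / (poch (c i) (j i) * ((j i).factorial : ℝ)) * x i ^ (j i))

/-- Terminating Gauss hypergeometric sum `₂F₁(-k, b; c; x)`. -/
noncomputable def hyp2F1 (k : ℕ) (b c x : ℝ) : ℝ :=
  ∑ j ∈ Finset.range (k + 1),
    poch (-(k : ℝ)) j * poch b j / (poch c j * (j.factorial : ℝ)) * x ^ j

/-- Terminating hypergeometric sum `₃F₂(-k, b₁, b₂; c₁, c₂; x)`. -/
noncomputable def hyp3F2 (k : ℕ) (b₁ b₂ c₁ c₂ x : ℝ) : ℝ :=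
  ∑ j ∈ Finset.range (k + 1),
    poch (-(k : ℝ)) j * poch b₁ j * poch b₂ j /
      (poch c₁ j * poch c₂ j * (j.factorial : ℝ)) * x ^ j

/-- Gauss hypergeometric series `₂F₁(a, b; c; x)` (a terminating series when `a` or `b`
is a nonpositive integer). -/
noncomputable def hypSum (a b c x : ℝ) : ℝ :=
  ∑' j : ℕ, poch a j * poch b j / (poch c j * (j.factorial : ℝ)) * x ^ j

/-- Terminating Appell function `F₂(a; -m₁, -m₂; c₁, c₂; x₁, x₂)`. -/
noncomputable def appellF2 (a : ℝ) (m₁ m₂ : ℕ) (c₁ c₂ x₁ x₂ : ℝ) : ℝ :=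
  ∑ j₁ ∈ Finset.range (m₁ + 1), ∑ j₂ ∈ Finset.range (m₂ + 1),
    poch a (j₁ + j₂) * poch (-(m₁ : ℝ)) j₁ * poch (-(m₂ : ℝ)) j₂ /
      (poch c₁ j₁ * poch c₂ j₂ * (j₁.factorial : ℝ) * (j₂.factorial : ℝ)) * x₁ ^ j₁ * x₂ ^ j₂

/-- `1/z!` with the convention that it vanishes for negative integers `z`. -/
noncomputable def invFacZ (z : ℤ) : ℝ := if 0 ≤ z then ((z.toNat.factorial : ℕ) : ℝ)⁻¹ else 0

/-- Pochhammer symbol extended to integer index via `(a)_k = Γ(a+k)/Γ(a)` for negative `k`. -/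
noncomputable def pochZ (a : ℝ) (k : ℤ) : ℝ :=
  if 0 ≤ k then poch a k.toNat else Real.Gamma (a + (k : ℝ)) / Real.Gamma a

lemma poch_succ (a : ℝ) (k : ℕ) : poch a (k + 1) = poch a k * (a + k) := by
  unfold poch; rw [Finset.prod_range_succ]

lemma poch_add' (a : ℝ) (m k : ℕ) : poch a (m + k) = poch a m * poch (a + m) k := by
  unfold poch
  rw [Finset.prod_range_add]
  congr 1
  refine Finset.prod_congr rfl fun i _ => ?_
  push_cast; ring

lemma poch_pos {a : ℝ} (ha : 0 < a) (k : ℕ) : 0 < poch a k := by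
  unfold poch
  exact Finset.prod_pos fun i _ => by positivity

lemma Gamma_add_nat' {a : ℝ} (ha : 0 < a) (k : ℕ) :
    Real.Gamma (a + k) = poch a k * Real.Gamma a := by
  induction k with
  | zero => simp [poch]
  | succ k ih =>
    have h : a + ((k : ℕ) + 1 : ℕ) = (a + k) + 1 := by push_cast; ring
    rw [h, Real.Gamma_add_one (by positivity), ih, poch_succ]
    ring

lemma poch_neg_nat (n : ℕ) : ∀ j ≤ n,
    poch (-(n:ℝ)) j * ((n-j).factorial : ℝ) = (-1)^j * (n.factorial : ℝ) := by
  intro j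
  induction j with
  | zero => simp [poch]
  | succ j ih =>
    intro h
    have hj : j ≤ n := Nat.le_of_succ_le h
    have h1 : n - j = (n - (j+1)) + 1 := by omega
    have h2 : ((n - j : ℕ) : ℝ) = (n : ℝ) - j := by
      rw [Nat.cast_sub hj]
    have h3 : ((n - j).factorial : ℝ) = ((n:ℝ) - j) * ((n - (j+1)).factorial : ℝ) := by
      rw [h1, Nat.factorial_succ]
      push_cast [Nat.cast_sub h]
      ring
    have := ih hj
    rw [poch_succ]
    have hne : ((n:ℝ) - j) ≠ 0 := by
      have : (j : ℝ) < n := by exact_mod_cast Nat.lt_of_lt_of_le (Nat.lt_succ_self j) h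
      linarith
    have hfac : ((n - j).factorial : ℝ) ≠ 0 := Nat.cast_ne_zero.mpr (Nat.factorial_ne_zero _)
    have key : poch (-(n:ℝ)) j = (-1)^j * (n.factorial : ℝ) / ((n - j).factorial : ℝ) := by
      field_simp at this ⊢; linarith [this]
    rw [key, h3] at *
    field_simp
    ring

lemma gbinom_sub (n j : ℕ) (α : ℝ) (h : j ≤ n) :
    gbinom ((n:ℝ) + α) (n - j) = poch (α + 1 + j) (n - j) / ((n - j).factorial : ℝ) := by
  unfold gbinom
  congr 2
  rw [Nat.cast_sub h]
  ring


/-- power moment of the Laguerre Rakhmanov density. -/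
theorem laguerre_power_moment (n : ℕ) (α s : ℝ) (hα : -1 < α) (hs : -1 < s + α) :
    ∫ x in Set.Ioi (0 : ℝ), x ^ (s + α) * Real.exp (-x) * (Lag α n x) ^ 2 =
      Real.Gamma (α + s + 1) * gbinom ((n : ℝ) + α) n ^ 2 *
        appellF2 (α + s + 1) n n (α + 1) (α + 1) 1 1 := by
  have ha : 0 < α + s + 1 := by linarith
  set a : ℝ := α + s + 1 with hadef
  set c : ℕ → ℝ := fun i => ((-1 : ℝ) ^ i / (i.factorial : ℝ)) * gbinom ((n : ℝ) + α) (n - i)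
    with hc
  -- integrability
  have hInt : ∀ m : ℕ, IntegrableOn (fun x : ℝ => x ^ (s + α) * Real.exp (-x) * x ^ m)
      (Set.Ioi 0) := by
    intro m
    have h := Real.GammaIntegral_convergent (s := a + m) (by positivity)
    refine h.congr_fun (fun x hx => ?_) measurableSet_Ioi
    have hx : (0:ℝ) < x := hx
    have hpow : x ^ ((s + α) + (m:ℝ)) = x ^ (s + α) * x ^ m := by
      rw [Real.rpow_add hx, Real.rpow_natCast]
    beta_reduce
    rw [show a + (m:ℝ) - 1 = (s + α) + (m:ℝ) by rw [hadef]; ring, hpow]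
    ring
  -- value of the basic integral
  have hval : ∀ m : ℕ, (∫ x in Set.Ioi (0:ℝ), x ^ (s + α) * Real.exp (-x) * x ^ m)
      = Real.Gamma (a + m) := by
    intro m
    rw [Real.Gamma_eq_integral (by positivity)]
    refine setIntegral_congr_fun measurableSet_Ioi fun x hx => ?_
    have hx : (0:ℝ) < x := hx
    have hpow : x ^ ((s + α) + (m:ℝ)) = x ^ (s + α) * x ^ m := by
      rw [Real.rpow_add hx, Real.rpow_natCast]
    rw [show a + (m:ℝ) - 1 = (s + α) + (m:ℝ) by rw [hadef]; ring, hpow]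
    ring
  have hLHS : (∫ x in Set.Ioi (0:ℝ), x ^ (s + α) * Real.exp (-x) * (Lag α n x) ^ 2)
      = ∑ i ∈ Finset.range (n+1), ∑ j ∈ Finset.range (n+1),
        (c i * c j) * Real.Gamma (a + (i + j)) := by
    have step1 : (∫ x in Set.Ioi (0:ℝ), x ^ (s + α) * Real.exp (-x) * (Lag α n x) ^ 2)
        = ∫ x in Set.Ioi (0:ℝ), ∑ i ∈ Finset.range (n+1), ∑ j ∈ Finset.range (n+1),
            (c i * c j) * (x ^ (s + α) * Real.exp (-x) * x ^ (i + j)) := by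
      refine setIntegral_congr_fun measurableSet_Ioi fun x hx => ?_
      rw [sq, Lag, Finset.sum_mul_sum]
      rw [Finset.mul_sum]
      refine Finset.sum_congr rfl fun i _ => ?_
      rw [Finset.mul_sum]
      refine Finset.sum_congr rfl fun j _ => ?_
      rw [pow_add]
      simp only [hc]
      ring
    rw [step1, integral_finset_sum _ (fun i _ => ?_)]
    · refine Finset.sum_congr rfl fun i _ => ?_
      rw [integral_finset_sum _ (fun j _ => ((hInt (i + j)).const_mul _))]
      refine Finset.sum_congr rfl fun j _ => ?_
      rw [MeasureTheory.integral_const_mul, hval]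
      push_cast
      ring_nf
    · exact integrable_finset_sum _ fun j _ => (hInt (i + j)).const_mul _
  rw [hLHS]
  -- Now the RHS
  rw [appellF2, Finset.mul_sum]
  refine Finset.sum_congr rfl fun i hi => ?_
  rw [Finset.mul_sum]
  refine Finset.sum_congr rfl fun j hj => ?_
  have hi' : i ≤ n := Nat.lt_succ_iff.mp (Finset.mem_range.mp hi)
  have hj' : j ≤ n := Nat.lt_succ_iff.mp (Finset.mem_range.mp hj)
  -- abbreviations
  have hgb : gbinom ((n : ℝ) + α) n = poch (α + 1) n / (n.factorial : ℝ) := by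
    unfold gbinom; congr 2; ring
  have hc_eq : ∀ k ≤ n, c k = ((-1:ℝ)^k / (k.factorial : ℝ)) *
      (poch (α + 1 + k) (n - k) / ((n - k).factorial : ℝ)) := by
    intro k hk
    simp only [hc]
    rw [gbinom_sub n k α hk]
  have hsplit : ∀ k ≤ n, poch (α + 1) n = poch (α + 1) k * poch (α + 1 + k) (n - k) := by
    intro k hk
    rw [show n = k + (n - k) by omega]
    rw [poch_add']
    rw [show k + (n - k) - k = n - k by omega]
  have hGam : Real.Gamma (a + (i + j : ℕ)) = poch a (i + j) * Real.Gamma a :=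
    Gamma_add_nat' ha (i + j)
  have hnegi := poch_neg_nat n i hi'
  have hnegj := poch_neg_nat n j hj'
  -- nonvanishing facts
  have hp1 : (0:ℝ) < poch (α + 1) i := poch_pos (by linarith) i
  have hp2 : (0:ℝ) < poch (α + 1) j := poch_pos (by linarith) j
  have hf1 : ((i.factorial : ℕ) : ℝ) ≠ 0 := Nat.cast_ne_zero.mpr (Nat.factorial_ne_zero _)
  have hf2 : ((j.factorial : ℕ) : ℝ) ≠ 0 := Nat.cast_ne_zero.mpr (Nat.factorial_ne_zero _)
  have hf3 : (((n-i).factorial : ℕ) : ℝ) ≠ 0 := Nat.cast_ne_zero.mpr (Nat.factorial_ne_zero _)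
  have hf4 : (((n-j).factorial : ℕ) : ℝ) ≠ 0 := Nat.cast_ne_zero.mpr (Nat.factorial_ne_zero _)
  have hf5 : ((n.factorial : ℕ) : ℝ) ≠ 0 := Nat.cast_ne_zero.mpr (Nat.factorial_ne_zero _)
  push_cast at hGam
  have hPP : poch (α + 1) n ^ 2 =
      (poch (α + 1) i * poch (α + 1 + i) (n - i)) *
        (poch (α + 1) j * poch (α + 1 + j) (n - j)) := by
    rw [sq]
    nth_rewrite 1 [hsplit i hi']
    rw [hsplit j hj']
  rw [hc_eq i hi', hc_eq j hj', hgb, hGam, div_pow, hPP, one_pow, one_pow]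
  have hni : poch (-(n:ℝ)) i = (-1:ℝ)^i * (n.factorial : ℝ) / (((n-i).factorial : ℕ) : ℝ) := by
    field_simp at hnegi ⊢; linarith
  have hnj : poch (-(n:ℝ)) j = (-1:ℝ)^j * (n.factorial : ℝ) / (((n-j).factorial : ℕ) : ℝ) := by
    field_simp at hnegj ⊢; linarith
  rw [hni, hnj]
  field_simp
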